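/- arXiv:1911.10116 — 3 statements merged into one kernel-verified Lean document; each statement's English description precedes it below -/
import Mathlib

section
/- Consider a generations network with generation size K ≥ 2 associated to symmetric observation sets with parameters (d, c) where d ≥ 2 and c ≥ 1, and let β_t denote the common value of the components of the equilibrium weight vectors β_i for agents i in generation t ≥ 2 (well defined by the symmetry of the network). Then β_t ≥ 1/d for every t ≥ 2, and β_t → 1/d as t → ∞. Equivalently, writing Var_t := Σ_j W_i(j)² for i in generation t and Cov_t := Σ_j W_i(j)W_{i′}(j) for distinct i, i′ in generation t, one has β_{t+1} = Var_t/(Var_t + (d−1)·Cov_t) and Var_t / Cov_t → 1 as t → ∞. -/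
open Matrix Finset Filter

/-- The equilibrium weight vectors of the sequential social-learning model. -/
noncomputable def eqW (Net : ℕ → Finset ℕ) (i : ℕ) : ℕ → ℝ :=
  Nat.strongRecOn i (fun n prev =>
    let nb := (Net n).filter (fun j => j < n)
    if nb.Nonempty then
      let What : Matrix {j // j ∈ nb} (Fin (n - 1)) ℝ :=
        Matrix.of (fun j m => prev j.1 (Finset.mem_filter.mp j.2).2 (m.1 + 1))
      let beta : {j // j ∈ nb} → ℝ :=
        Matrix.vecMul (fun j => ∑ m, What j m) ((What * What.transpose)⁻¹)
      fun m => (if m = n then (1 : ℝ) else 0) +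
        ∑ j : {j // j ∈ nb}, beta j * prev j.1 (Finset.mem_filter.mp j.2).2 m
    else fun m => if m = n then (1 : ℝ) else 0)

/-- The number of signals aggregated by agent `i`: `r_i = Σ_j W_i(j)`. -/
noncomputable def rcount (Net : ℕ → Finset ℕ) (i : ℕ) : ℝ :=
  ∑ j ∈ Finset.range (i + 1), eqW Net i j

/-- The generations network with generation size `K` and observation sets `Ψ`:
`N(i) = ∅` for `1 ≤ i ≤ K`, and `N((t−1)K+k) = {(t−2)K+ψ : ψ ∈ Ψ_k}` for `t ≥ 2`,
`1 ≤ k ≤ K`. -/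
def genNet (K : ℕ) (Ψ : ℕ → Finset ℕ) : ℕ → Finset ℕ := fun i =>
  if i ≤ K then ∅
  else (Ψ ((i - 1) % K + 1)).image (fun ψ => ((i - 1) / K - 1) * K + ψ)

/-- The (filtered) neighborhood used in the equilibrium weight recursion. -/
def nbr (Net : ℕ → Finset ℕ) (i : ℕ) : Finset ℕ := (Net i).filter (fun j => j < i)

/-- The matrix `Ŵ` of agent `i`'s neighbors' weight vectors restricted to
coordinates `1,…,i−1`. -/
noncomputable def hatW (Net : ℕ → Finset ℕ) (i : ℕ) :
    Matrix {j // j ∈ nbr Net i} (Fin (i - 1)) ℝ :=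
  Matrix.of (fun j m => eqW Net j.1 (m.1 + 1))

/-- The equilibrium weight vector `β_i = 𝟙ᵀ Ŵᵀ (ŴŴᵀ)⁻¹` of agent `i` on her
neighbors' log-actions. -/
noncomputable def eqBeta (Net : ℕ → Finset ℕ) (i : ℕ) : {j // j ∈ nbr Net i} → ℝ :=
  Matrix.vecMul (fun j => ∑ m, hatW Net i j m)
    ((hatW Net i * (hatW Net i).transpose)⁻¹)

/-- `Var_t`: the common value of `Σ_j W_i(j)²` over agents `i` of generation `t`
(computed at the agent in position 1). -/
noncomputable def VarT (Net : ℕ → Finset ℕ) (K t : ℕ) : ℝ :=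
  ∑ j ∈ Finset.range (t * K + 1), (eqW Net ((t - 1) * K + 1) j) ^ 2

/-- `Cov_t`: the common value of `Σ_j W_i(j)W_{i′}(j)` over pairs of distinct agents
of generation `t` (computed at the agents in positions 1 and 2). -/
noncomputable def CovT (Net : ℕ → Finset ℕ) (K t : ℕ) : ℝ :=
  ∑ j ∈ Finset.range (t * K + 1),
    eqW Net ((t - 1) * K + 1) j * eqW Net ((t - 1) * K + 2) j

theorem eqW_eq (Net : ℕ → Finset ℕ) (i : ℕ) :
    eqW Net i = if (nbr Net i).Nonempty then
      (fun m => (if m = i then (1:ℝ) else 0) +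
        ∑ j : {j // j ∈ nbr Net i}, eqBeta Net i j * eqW Net j.1 m)
    else fun m => if m = i then (1:ℝ) else 0 := by
  rw [eqW, Nat.strongRecOn_eq]
  rfl

theorem eqW_empty (Net : ℕ → Finset ℕ) (i : ℕ) (h : nbr Net i = ∅) :
    eqW Net i = fun m => if m = i then (1:ℝ) else 0 := by
  rw [eqW_eq, if_neg (by simp [h])]

theorem eqW_pos (Net : ℕ → Finset ℕ) (i : ℕ) (h : (nbr Net i).Nonempty) (m : ℕ) :
    eqW Net i m = (if m = i then (1:ℝ) else 0) +
      ∑ j : {j // j ∈ nbr Net i}, eqBeta Net i j * eqW Net j.1 m := by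
  rw [eqW_eq, if_pos h]


theorem nbr_gen1 (K : ℕ) (Ψ : ℕ → Finset ℕ) (i : ℕ) (h : i ≤ K) :
    nbr (genNet K Ψ) i = ∅ := by
  simp [nbr, genNet, h]

theorem genNet_gen (K : ℕ) (Ψ : ℕ → Finset ℕ) (a k : ℕ) (hk1 : 1 ≤ k) (hkK : k ≤ K) :
    genNet K Ψ ((a+1) * K + k) = (Ψ k).image (fun ψ => a * K + ψ) := by
  have h1 : (a+1) * K + k - 1 = (k-1) + (a+1) * K := by omega
  have h2 : ¬ ((a+1)*K + k ≤ K) := by nlinarith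
  have h3 : ((k-1) + (a+1) * K) % K = k - 1 := by
    rw [Nat.add_mul_mod_self_right, Nat.mod_eq_of_lt (by omega)]
  have h4 : ((k-1) + (a+1) * K) / K = a + 1 := by
    rw [Nat.add_mul_div_right _ _ (by omega : 0 < K), Nat.div_eq_of_lt (by omega)]; omega
  simp only [genNet, if_neg h2, h1, h3, h4]
  rw [show k - 1 + 1 = k from by omega, show a + 1 - 1 = a from rfl]

theorem nbr_gen (K : ℕ) (Ψ : ℕ → Finset ℕ) (hsub : ∀ k ∈ Finset.Icc 1 K, Ψ k ⊆ Finset.Icc 1 K)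
    (a k : ℕ) (hk1 : 1 ≤ k) (hkK : k ≤ K) :
    nbr (genNet K Ψ) ((a+1) * K + k) = (Ψ k).image (fun ψ => a * K + ψ) := by
  rw [nbr, genNet_gen K Ψ a k hk1 hkK]
  apply Finset.filter_true_of_mem
  intro j hj
  obtain ⟨ψ, hψ, rfl⟩ := Finset.mem_image.mp hj
  have := hsub k (Finset.mem_Icc.mpr ⟨hk1, hkK⟩) hψ
  simp only [Finset.mem_Icc] at this
  nlinarith

noncomputable def VC (d c : ℝ) : ℕ → ℝ × ℝ
  | 0 => (1, 0)
  | n+1 =>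
    let V := (VC d c n).1
    let C := (VC d c n).2
    let b := V / (V + (d-1)*C)
    (1 + b^2 * d * (V + (d-1)*C), b^2 * (c*V + (d^2-c)*C))

theorem VC_inv (d c : ℝ) (hd : 2 ≤ d) (hc : 1 ≤ c) (hcd : c ≤ d) :
    ∀ n : ℕ, 1 ≤ (VC d c n).1 ∧ 0 ≤ (VC d c n).2 ∧ 1 ≤ (VC d c n).1 - (VC d c n).2 ∧
      (n+1:ℝ) ≤ (VC d c n).1 := by
  intro n
  induction n with
  | zero => simp [VC]
  | succ n ih =>
    obtain ⟨hV, hC, hD, hVn⟩ := ih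
    set V := (VC d c n).1 with hVdef
    set C := (VC d c n).2 with hCdef
    have hCV : C ≤ V - 1 := by linarith
    have hS : (1:ℝ) ≤ V + (d-1)*C := by nlinarith
    set b := V / (V + (d-1)*C) with hbdef
    have hb0 : 0 < b := div_pos (by linarith) (by linarith)
    have hb1 : b ≤ 1 := by
      rw [hbdef, div_le_one (by linarith)]; nlinarith
    have hbS : b * (V + (d-1)*C) = V := div_mul_cancel₀ V (by linarith)
    have hbSd : d * b * (V + (d-1)*C) = d * V := by rw [mul_assoc, hbS]
    have hdv : V + (d-1)*C ≤ d * V := by nlinarith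
    have hbd : 1 ≤ d * b := by nlinarith [hbSd, hdv, hS]
    have hVC1 : (VC d c (n+1)).1 = 1 + b^2 * d * (V + (d-1)*C) := rfl
    have hVC2 : (VC d c (n+1)).2 = b^2 * (c*V + (d^2-c)*C) := rfl
    have hV1' : (VC d c (n+1)).1 = 1 + d * b * V := by
      have h : b^2*d*(V + (d-1)*C) = d*b*(b*(V + (d-1)*C)) := by ring
      rw [hVC1, h, hbS]
    refine ⟨?_, ?_, ?_, ?_⟩
    · rw [hV1']; nlinarith
    · rw [hVC2]; have : 0 ≤ d^2 - c := by nlinarith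
      have : 0 ≤ c*V + (d^2-c)*C := by nlinarith
      positivity
    · rw [hVC1, hVC2]
      have key : 1 + b^2*d*(V + (d-1)*C) - b^2*(c*V + (d^2-c)*C)
          = 1 + b^2*(d-c)*(V-C) := by ring
      rw [key]
      have : 0 ≤ b^2*(d-c)*(V-C) :=
        mul_nonneg (mul_nonneg (sq_nonneg b) (by linarith)) (by linarith)
      linarith
    · rw [hV1']; push_cast; nlinarith


/-- helper: extend/shrink a range sum when the tail vanishes -/
theorem sum_extend {f : ℕ → ℝ} {N N' : ℕ} (h : N ≤ N') (h0 : ∀ m, N ≤ m → f m = 0) :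
    ∑ m ∈ Finset.range N', f m = ∑ m ∈ Finset.range N, f m :=
  (Finset.sum_subset (Finset.range_subset_range.mpr h)
    (fun x _ hnx => h0 x (by simpa using hnx))).symm

/-- helper: counting pairs -/
theorem pair_count (s t : Finset ℕ) (A B : ℝ) :
    ∑ ψ ∈ s, ∑ ψ' ∈ t, (if ψ = ψ' then A else B)
      = ((s ∩ t).card : ℝ) * (A - B) + ((s.card : ℝ) * (t.card : ℝ)) * B := by
  have h1 : ∀ ψ ∈ s, ∑ ψ' ∈ t, (if ψ = ψ' then A else B)
      = (if ψ ∈ t then (A - B) else 0) + (t.card : ℝ) * B := by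
    intro ψ _
    have : ∀ ψ' ∈ t, (if ψ = ψ' then A else B)
        = (if ψ = ψ' then (A-B) else 0) + B := by
      intro ψ' _; split <;> ring
    rw [Finset.sum_congr rfl this, Finset.sum_add_distrib, Finset.sum_ite_eq,
      Finset.sum_const, nsmul_eq_mul]
  rw [Finset.sum_congr rfl h1, Finset.sum_add_distrib, Finset.sum_const, nsmul_eq_mul]
  have h2 : ∑ ψ ∈ s, (if ψ ∈ t then (A-B) else 0) = ((s ∩ t).card : ℝ) * (A - B) := by
    rw [Finset.sum_ite_mem, Finset.sum_const, nsmul_eq_mul]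
  rw [h2]; ring

/-- the structural induction package -/
def Pack (K d c : ℕ) (Ψ : ℕ → Finset ℕ) (a : ℕ) : Prop :=
  ∀ k ∈ Finset.Icc 1 K,
    (∀ m : ℕ, (m = 0 ∨ a*K+k < m) → eqW (genNet K Ψ) (a*K+k) m = 0) ∧
    (∑ m ∈ Finset.range ((a+1)*K+1), eqW (genNet K Ψ) (a*K+k) m = (VC d c a).1) ∧
    (∑ m ∈ Finset.range ((a+1)*K+1), (eqW (genNet K Ψ) (a*K+k) m)^2 = (VC d c a).1) ∧
    (∀ k' ∈ Finset.Icc 1 K, k ≠ k' → ∑ m ∈ Finset.range ((a+1)*K+1),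
      eqW (genNet K Ψ) (a*K+k) m * eqW (genNet K Ψ) (a*K+k') m = (VC d c a).2)

theorem pack_zero (K d c : ℕ) (hK : 1 ≤ K) (Ψ : ℕ → Finset ℕ) : Pack K d c Ψ 0 := by
  intro k hk
  rw [Finset.mem_Icc] at hk
  have hW : eqW (genNet K Ψ) (0*K+k) = fun m => if m = 0*K+k then (1:ℝ) else 0 :=
    eqW_empty _ _ (nbr_gen1 K Ψ _ (by omega))
  refine ⟨?_, ?_, ?_, ?_⟩
  · intro m hm; rw [hW]; simp only [zero_mul, zero_add] at hm ⊢
    rw [if_neg (by omega)]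
  · rw [hW]
    rw [Finset.sum_ite_eq' (Finset.range ((0+1)*K+1)) (0*K+k) (fun _ => (1:ℝ))]
    rw [if_pos (Finset.mem_range.mpr (by omega))]; rfl
  · rw [hW]
    have : ∀ m ∈ Finset.range ((0+1)*K+1),
        ((if m = 0*K+k then (1:ℝ) else 0))^2 = if m = 0*K+k then (1:ℝ) else 0 := by
      intro m _; split <;> norm_num
    rw [Finset.sum_congr rfl this,
      Finset.sum_ite_eq' (Finset.range ((0+1)*K+1)) (0*K+k) (fun _ => (1:ℝ))]
    rw [if_pos (Finset.mem_range.mpr (by omega))]; rfl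
  · intro k' hk' hne
    rw [Finset.mem_Icc] at hk'
    have hW' : eqW (genNet K Ψ) (0*K+k') = fun m => if m = 0*K+k' then (1:ℝ) else 0 :=
      eqW_empty _ _ (nbr_gen1 K Ψ _ (by omega))
    rw [hW, hW']
    have : ∀ m ∈ Finset.range ((0+1)*K+1),
        (if m = 0*K+k then (1:ℝ) else 0) * (if m = 0*K+k' then (1:ℝ) else 0) = 0 := by
      intro m _
      rcases eq_or_ne m (0*K+k) with h | h
      · rw [h, if_neg (show ¬(0*K+k = 0*K+k') by omega), mul_zero]
      · rw [if_neg h, zero_mul]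
    rw [Finset.sum_congr rfl this, Finset.sum_const_zero]; rfl

theorem shift_sum {i N : ℕ} (hi : 1 ≤ i) (hN : N ≤ i) (g : ℕ → ℝ) (h0 : g 0 = 0)
    (htail : ∀ m, N ≤ m → g m = 0) :
    ∑ m : Fin (i-1), g (m.1+1) = ∑ m ∈ Finset.range N, g m := by
  rw [Fin.sum_univ_eq_sum_range (fun m => g (m+1)) (i-1)]
  have h1 := Finset.sum_range_succ' g (i-1)
  rw [show i - 1 + 1 = i from by omega, h0, add_zero] at h1
  rw [← h1]
  exact sum_extend hN htail

theorem nbr_mem_dest (K : ℕ) (Ψ : ℕ → Finset ℕ)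
    (hsub : ∀ k ∈ Finset.Icc 1 K, Ψ k ⊆ Finset.Icc 1 K)
    (a k : ℕ) (hk1 : 1 ≤ k) (hkK : k ≤ K) {j : ℕ}
    (hj : j ∈ nbr (genNet K Ψ) ((a+1)*K+k)) :
    ∃ ψ, ψ ∈ Ψ k ∧ 1 ≤ ψ ∧ ψ ≤ K ∧ j = a*K + ψ := by
  rw [nbr_gen K Ψ hsub a k hk1 hkK] at hj
  obtain ⟨ψ, hψ, rfl⟩ := Finset.mem_image.mp hj
  have h2 := hsub k (Finset.mem_Icc.mpr ⟨hk1, hkK⟩) hψ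
  rw [Finset.mem_Icc] at h2
  exact ⟨ψ, hψ, h2.1, h2.2, rfl⟩

theorem gram_entry (K d c : ℕ) (Ψ : ℕ → Finset ℕ)
    (hsub : ∀ k ∈ Finset.Icc 1 K, Ψ k ⊆ Finset.Icc 1 K)
    (a k : ℕ) (hk1 : 1 ≤ k) (hkK : k ≤ K) (hP : Pack K d c Ψ a)
    (j j' : {x // x ∈ nbr (genNet K Ψ) ((a+1)*K+k)}) :
    (hatW (genNet K Ψ) ((a+1)*K+k) * (hatW (genNet K Ψ) ((a+1)*K+k)).transpose) j j'
      = if j = j' then ((VC d c a).1 : ℝ) else (VC d c a).2 := by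
  have hiK : (a+1)*K = a*K+K := by ring
  obtain ⟨ψ, hψ, hψ1, hψK, hjv⟩ := nbr_mem_dest K Ψ hsub a k hk1 hkK j.2
  obtain ⟨ψ', hψ', hψ1', hψK', hjv'⟩ := nbr_mem_dest K Ψ hsub a k hk1 hkK j'.2
  have hψIcc : ψ ∈ Finset.Icc 1 K := Finset.mem_Icc.mpr ⟨hψ1, hψK⟩
  have hψIcc' : ψ' ∈ Finset.Icc 1 K := Finset.mem_Icc.mpr ⟨hψ1', hψK'⟩
  rw [Matrix.mul_apply]
  simp only [hatW, Matrix.transpose_apply, Matrix.of_apply]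
  have hkey : ∑ m : Fin ((a+1)*K+k-1), (fun n => eqW (genNet K Ψ) j.1 n * eqW (genNet K Ψ) j'.1 n) (m.1+1)
      = ∑ m ∈ Finset.range ((a+1)*K+1), eqW (genNet K Ψ) j.1 m * eqW (genNet K Ψ) j'.1 m := by
    refine shift_sum (i := (a+1)*K+k) (N := (a+1)*K+1)
      (g := fun n => eqW (genNet K Ψ) j.1 n * eqW (genNet K Ψ) j'.1 n)
      (by omega) (by omega) ?_ ?_
    · beta_reduce
      rw [hjv, (hP ψ hψIcc).1 0 (Or.inl rfl), zero_mul]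
    · intro m hm
      beta_reduce
      rw [hjv, (hP ψ hψIcc).1 m (Or.inr (by omega)), zero_mul]
  rw [hkey, hjv, hjv']
  rcases eq_or_ne ψ ψ' with h | h
  · rw [if_pos (by apply Subtype.ext; omega)]
    subst h
    have hsq : ∀ m, eqW (genNet K Ψ) (a*K+ψ) m * eqW (genNet K Ψ) (a*K+ψ) m
        = (eqW (genNet K Ψ) (a*K+ψ) m)^2 := fun m => (sq _).symm
    rw [Finset.sum_congr rfl (fun m _ => hsq m)]
    exact (hP ψ hψIcc).2.2.1
  · rw [if_neg (by intro he; rw [he] at hjv; omega)]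
    exact (hP ψ hψIcc).2.2.2 ψ' hψIcc' h

theorem row_sum (K d c : ℕ) (Ψ : ℕ → Finset ℕ)
    (hsub : ∀ k ∈ Finset.Icc 1 K, Ψ k ⊆ Finset.Icc 1 K)
    (a k : ℕ) (hk1 : 1 ≤ k) (hkK : k ≤ K) (hP : Pack K d c Ψ a)
    (j : {x // x ∈ nbr (genNet K Ψ) ((a+1)*K+k)}) :
    ∑ m, hatW (genNet K Ψ) ((a+1)*K+k) j m = ((VC d c a).1 : ℝ) := by
  have hiK : (a+1)*K = a*K+K := by ring
  obtain ⟨ψ, hψ, hψ1, hψK, hjv⟩ := nbr_mem_dest K Ψ hsub a k hk1 hkK j.2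
  have hψIcc : ψ ∈ Finset.Icc 1 K := Finset.mem_Icc.mpr ⟨hψ1, hψK⟩
  simp only [hatW, Matrix.of_apply]
  have hkey : ∑ m : Fin ((a+1)*K+k-1), (fun n => eqW (genNet K Ψ) j.1 n) (m.1+1)
      = ∑ m ∈ Finset.range ((a+1)*K+1), eqW (genNet K Ψ) j.1 m := by
    refine shift_sum (i := (a+1)*K+k) (N := (a+1)*K+1)
      (g := fun n => eqW (genNet K Ψ) j.1 n)
      (by omega) (by omega) ?_ ?_
    · beta_reduce
      rw [hjv]; exact (hP ψ hψIcc).1 0 (Or.inl rfl)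
    · intro m hm
      beta_reduce
      rw [hjv]; exact (hP ψ hψIcc).1 m (Or.inr (by omega))
  rw [hkey, hjv]
  exact (hP ψ hψIcc).2.1

theorem beta_const (K d c : ℕ) (hd : 2 ≤ d) (hc : 1 ≤ c) (hcd : c ≤ d) (Ψ : ℕ → Finset ℕ)
    (hsub : ∀ k ∈ Finset.Icc 1 K, Ψ k ⊆ Finset.Icc 1 K)
    (hcard : ∀ k ∈ Finset.Icc 1 K, (Ψ k).card = d)
    (a k : ℕ) (hk1 : 1 ≤ k) (hkK : k ≤ K) (hP : Pack K d c Ψ a)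
    (j : {x // x ∈ nbr (genNet K Ψ) ((a+1)*K+k)}) :
    eqBeta (genNet K Ψ) ((a+1)*K+k) j
      = (VC d c a).1 / ((VC d c a).1 + ((d:ℝ)-1)*(VC d c a).2) := by
  obtain ⟨hV, hC, hD, hVn⟩ := VC_inv (d:ℝ) (c:ℝ) (by exact_mod_cast hd)
    (by exact_mod_cast hc) (by exact_mod_cast hcd) a
  set Va := ((VC d c a).1 : ℝ) with hVa
  set Ca := ((VC d c a).2 : ℝ) with hCa
  set α := Va - Ca with hα
  set S := Va + ((d:ℝ)-1)*Ca with hS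
  have hdR : (2:ℝ) ≤ (d:ℝ) := by exact_mod_cast hd
  have hα1 : (1:ℝ) ≤ α := hD
  have hS1 : (1:ℝ) ≤ S := by rw [hS]; nlinarith
  have hSα : S = α + (d:ℝ)*Ca := by rw [hS, hα]; ring
  have hα0 : α ≠ 0 := by linarith
  have hS0' : α + (d:ℝ)*Ca ≠ 0 := by rw [← hSα]; linarith
  have hcardU : (Finset.univ : Finset {x // x ∈ nbr (genNet K Ψ) ((a+1)*K+k)}).card = d := by
    rw [Finset.card_univ, Fintype.card_coe, nbr_gen K Ψ hsub a k hk1 hkK,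
      Finset.card_image_of_injective _ (fun x y h => by omega),
      hcard k (Finset.mem_Icc.mpr ⟨hk1, hkK⟩)]
  set p := 1/α with hp
  set q := -Ca/(α*S) with hq
  set Ninv : Matrix {x // x ∈ nbr (genNet K Ψ) ((a+1)*K+k)}
      {x // x ∈ nbr (genNet K Ψ) ((a+1)*K+k)} ℝ :=
    Matrix.of (fun l j' => q + if l = j' then p else 0) with hNinv
  have hMN : (hatW (genNet K Ψ) ((a+1)*K+k) * (hatW (genNet K Ψ) ((a+1)*K+k)).transpose)
      * Ninv = 1 := by
    ext x y
    rw [Matrix.mul_apply, Matrix.one_apply]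
    have hterm : ∀ l, (hatW (genNet K Ψ) ((a+1)*K+k) *
        (hatW (genNet K Ψ) ((a+1)*K+k)).transpose) x l * Ninv l y
        = Ca*q + (Ca * (if l = y then p else 0) +
            ((if x = l then α else 0) * q +
             (if x = l then (if l = y then α*p else 0) else 0))) := by
      intro l
      rw [gram_entry K d c Ψ hsub a k hk1 hkK hP, hNinv]
      simp only [Matrix.of_apply, ← hVa, ← hCa]
      split_ifs <;> first | ring | (rw [hα]; ring)
    rw [Finset.sum_congr rfl (fun l _ => hterm l), Finset.sum_add_distrib,
      Finset.sum_add_distrib, Finset.sum_add_distrib, Finset.sum_const,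
      hcardU, ← Finset.mul_sum,
      Finset.sum_ite_eq' Finset.univ y (fun _ => p), if_pos (Finset.mem_univ y),
      ← Finset.sum_mul,
      Finset.sum_ite_eq Finset.univ x (fun _ => α), if_pos (Finset.mem_univ x),
      Finset.sum_ite_eq Finset.univ x (fun l => if l = y then α*p else 0),
      if_pos (Finset.mem_univ x), nsmul_eq_mul]
    rcases eq_or_ne x y with h | h
    · rw [if_pos h, if_pos h, hp, hq, hSα]
      field_simp
      ring
    · rw [if_neg h, if_neg h, hp, hq, hSα]
      field_simp
      ring
  have hinv : (hatW (genNet K Ψ) ((a+1)*K+k) *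
      (hatW (genNet K Ψ) ((a+1)*K+k)).transpose)⁻¹ = Ninv :=
    Matrix.inv_eq_right_inv hMN
  rw [eqBeta, hinv]
  rw [Matrix.vecMul, dotProduct]
  have hterm2 : ∀ l, (∑ m, hatW (genNet K Ψ) ((a+1)*K+k) l m) * Ninv l j
      = Va*q + (if l = j then Va*p else 0) := by
    intro l
    rw [row_sum K d c Ψ hsub a k hk1 hkK hP l, hNinv]
    simp only [Matrix.of_apply, ← hVa]
    split_ifs <;> ring
  rw [Finset.sum_congr rfl (fun l _ => hterm2 l), Finset.sum_add_distrib,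
    Finset.sum_const, hcardU,
    Finset.sum_ite_eq' Finset.univ j (fun _ => Va*p), if_pos (Finset.mem_univ j),
    nsmul_eq_mul]
  rw [hp, hq, hSα]
  field_simp
  ring

theorem tail_zero (K d c : ℕ) (Ψ : ℕ → Finset ℕ) (a ψ : ℕ) (hP : Pack K d c Ψ a)
    (hψ1 : 1 ≤ ψ) (hψK : ψ ≤ K) :
    ∀ m, (a+1)*K+1 ≤ m → eqW (genNet K Ψ) (a*K+ψ) m = 0 := by
  intro m hm
  have hiK : (a+1)*K = a*K+K := by ring
  exact (hP ψ (Finset.mem_Icc.mpr ⟨hψ1, hψK⟩)).1 m (Or.inr (by omega))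

theorem cross_sum (K d c : ℕ) (Ψ : ℕ → Finset ℕ)
    (hsub : ∀ k ∈ Finset.Icc 1 K, Ψ k ⊆ Finset.Icc 1 K)
    (a : ℕ) (hP : Pack K d c Ψ a) (ψ ψ' : ℕ)
    (hψ1 : 1 ≤ ψ) (hψK : ψ ≤ K) (hψ1' : 1 ≤ ψ') (hψK' : ψ' ≤ K)
    (R : ℕ) (hR : (a+1)*K+1 ≤ R) :
    ∑ m ∈ Finset.range R, eqW (genNet K Ψ) (a*K+ψ) m * eqW (genNet K Ψ) (a*K+ψ') m
      = if ψ = ψ' then ((VC d c a).1 : ℝ) else (VC d c a).2 := by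
  have hψIcc : ψ ∈ Finset.Icc 1 K := Finset.mem_Icc.mpr ⟨hψ1, hψK⟩
  have hψIcc' : ψ' ∈ Finset.Icc 1 K := Finset.mem_Icc.mpr ⟨hψ1', hψK'⟩
  rw [sum_extend hR (fun m hm => by
    rw [tail_zero K d c Ψ a ψ hP hψ1 hψK m hm, zero_mul])]
  rcases eq_or_ne ψ ψ' with h | h
  · subst h
    rw [if_pos rfl, Finset.sum_congr rfl (fun m _ => (sq _).symm)]
    exact (hP ψ hψIcc).2.2.1
  · rw [if_neg h]
    exact (hP ψ hψIcc).2.2.2 ψ' hψIcc' (by omega)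

theorem sum_delta (R i : ℕ) (hi : i < R) :
    ∑ m ∈ Finset.range R, (if m = i then (1:ℝ) else 0) = 1 := by
  rw [Finset.sum_ite_eq' (Finset.range R) i (fun _ => (1:ℝ)),
    if_pos (Finset.mem_range.mpr hi)]

theorem sum_delta_mul (R i : ℕ) (hi : i < R) (g : ℕ → ℝ) :
    ∑ m ∈ Finset.range R, (if m = i then (1:ℝ) else 0) * g m = g i := by
  rw [Finset.sum_congr rfl (fun m _ =>
    show (if m = i then (1:ℝ) else 0) * g m = if m = i then g m else 0 by
      split_ifs <;> simp),
    Finset.sum_ite_eq' (Finset.range R) i g, if_pos (Finset.mem_range.mpr hi)]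

theorem eqW_step (K d c : ℕ) (hd : 2 ≤ d) (hc : 1 ≤ c) (hcd : c ≤ d) (Ψ : ℕ → Finset ℕ)
    (hsub : ∀ k ∈ Finset.Icc 1 K, Ψ k ⊆ Finset.Icc 1 K)
    (hcard : ∀ k ∈ Finset.Icc 1 K, (Ψ k).card = d)
    (a k : ℕ) (hk1 : 1 ≤ k) (hkK : k ≤ K) (hP : Pack K d c Ψ a) (m : ℕ) :
    eqW (genNet K Ψ) ((a+1)*K+k) m
      = (if m = (a+1)*K+k then (1:ℝ) else 0)
        + ((VC d c a).1/((VC d c a).1+((d:ℝ)-1)*(VC d c a).2))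
          * ∑ ψ ∈ Ψ k, eqW (genNet K Ψ) (a*K+ψ) m := by
  have hne : (nbr (genNet K Ψ) ((a+1)*K+k)).Nonempty := by
    rw [nbr_gen K Ψ hsub a k hk1 hkK]
    apply Finset.Nonempty.image
    rw [← Finset.card_pos, hcard k (Finset.mem_Icc.mpr ⟨hk1, hkK⟩)]; omega
  rw [eqW_pos _ _ hne m]
  congr 1
  rw [Finset.sum_congr rfl (fun j _ => by
    rw [beta_const K d c hd hc hcd Ψ hsub hcard a k hk1 hkK hP j]),
    ← Finset.mul_sum]
  congr 1
  rw [Finset.sum_coe_sort (nbr (genNet K Ψ) ((a+1)*K+k)) (fun x => eqW (genNet K Ψ) x m),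
    nbr_gen K Ψ hsub a k hk1 hkK,
    Finset.sum_image (fun x _ y _ h => by omega : ∀ x ∈ Ψ k, ∀ y ∈ Ψ k,
      a*K+x = a*K+y → x = y)]

theorem pack_succ (K d c : ℕ) (hK : 2 ≤ K) (hd : 2 ≤ d) (hc : 1 ≤ c) (hcd : c ≤ d)
    (Ψ : ℕ → Finset ℕ)
    (hsub : ∀ k ∈ Finset.Icc 1 K, Ψ k ⊆ Finset.Icc 1 K)
    (hcard : ∀ k ∈ Finset.Icc 1 K, (Ψ k).card = d)
    (hinter : ∀ k₁ ∈ Finset.Icc 1 K, ∀ k₂ ∈ Finset.Icc 1 K, k₁ ≠ k₂ →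
      ((Ψ k₁) ∩ (Ψ k₂)).card = c)
    (a : ℕ) (hP : Pack K d c Ψ a) : Pack K d c Ψ (a+1) := by
  intro k hk
  have hk' := Finset.mem_Icc.mp hk
  have hiK : (a+1)*K = a*K+K := by ring
  have hiK2 : (a+1+1)*K = a*K+K+K := by ring
  obtain ⟨hV, hC, hD, hVn⟩ := VC_inv (d:ℝ) (c:ℝ) (by exact_mod_cast hd)
    (by exact_mod_cast hc) (by exact_mod_cast hcd) a
  set Va := ((VC d c a).1 : ℝ) with hVa
  set Ca := ((VC d c a).2 : ℝ) with hCa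
  have hdR : (2:ℝ) ≤ (d:ℝ) := by exact_mod_cast hd
  have hS1 : (1:ℝ) ≤ Va + ((d:ℝ)-1)*Ca := by nlinarith
  set β := Va/(Va+((d:ℝ)-1)*Ca) with hβ
  have hβS : β * (Va+((d:ℝ)-1)*Ca) = Va := div_mul_cancel₀ Va (by linarith)
  have hV1 : (VC d c (a+1)).1 = 1 + β^2*(d:ℝ)*(Va+((d:ℝ)-1)*Ca) := rfl
  have hC1 : (VC d c (a+1)).2 = β^2*((c:ℝ)*Va + ((d:ℝ)^2-(c:ℝ))*Ca) := rfl
  have hstep := eqW_step K d c hd hc hcd Ψ hsub hcard a k hk'.1 hk'.2 hP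
  rw [← hVa, ← hCa, ← hβ] at hstep
  have hmem : ∀ k'' ∈ Finset.Icc 1 K, ∀ ψ ∈ Ψ k'', 1 ≤ ψ ∧ ψ ≤ K := by
    intro k'' hk'' ψ hψ
    have := hsub k'' hk'' hψ
    rwa [Finset.mem_Icc] at this
  have hTzero : ∀ k'' ∈ Finset.Icc 1 K, ∀ m : ℕ, ((a+1)*K < m ∨ m = 0) →
      ∑ ψ ∈ Ψ k'', eqW (genNet K Ψ) (a*K+ψ) m = 0 := by
    intro k'' hk'' m hm
    apply Finset.sum_eq_zero
    intro ψ hψ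
    obtain ⟨h1, h2⟩ := hmem k'' hk'' ψ hψ
    rcases hm with hm | hm
    · exact (hP ψ (Finset.mem_Icc.mpr ⟨h1, h2⟩)).1 m (Or.inr (by omega))
    · exact (hP ψ (Finset.mem_Icc.mpr ⟨h1, h2⟩)).1 m (Or.inl hm)
  have hsum_inner : ∀ ψ ∈ Ψ k, ∑ m ∈ Finset.range ((a+1+1)*K+1),
      eqW (genNet K Ψ) (a*K+ψ) m = Va := by
    intro ψ hψ
    obtain ⟨h1, h2⟩ := hmem k hk ψ hψ
    rw [sum_extend (show (a+1)*K+1 ≤ (a+1+1)*K+1 by omega)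
      (tail_zero K d c Ψ a ψ hP h1 h2)]
    exact (hP ψ (Finset.mem_Icc.mpr ⟨h1, h2⟩)).2.1
  have hcross : ∀ k'' ∈ Finset.Icc 1 K, ∀ ψ ∈ Ψ k, ∀ ψ' ∈ Ψ k'',
      ∑ m ∈ Finset.range ((a+1+1)*K+1),
        eqW (genNet K Ψ) (a*K+ψ) m * eqW (genNet K Ψ) (a*K+ψ') m
        = if ψ = ψ' then Va else Ca := by
    intro k'' hk'' ψ hψ ψ' hψ'
    obtain ⟨h1, h2⟩ := hmem k hk ψ hψ
    obtain ⟨h1', h2'⟩ := hmem k'' hk'' ψ' hψ'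
    exact cross_sum K d c Ψ hsub a hP ψ ψ' h1 h2 h1' h2' _ (by omega)
  refine ⟨?_, ?_, ?_, ?_⟩
  -- (1) support
  · intro m hm
    rw [hstep m]
    rcases hm with hm | hm
    · rw [if_neg (by omega), hTzero k hk m (Or.inr hm), mul_zero, add_zero]
    · rw [if_neg (by omega), hTzero k hk m (Or.inl (by omega)), mul_zero, add_zero]
  -- (2) weight sum
  · rw [Finset.sum_congr rfl (fun m _ => hstep m), Finset.sum_add_distrib,
      sum_delta _ _ (by omega), ← Finset.mul_sum, Finset.sum_comm,
      Finset.sum_congr rfl hsum_inner, Finset.sum_const, nsmul_eq_mul,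
      hcard k hk, hV1]
    have hkey : β^2*(d:ℝ)*(Va+((d:ℝ)-1)*Ca) = β*((d:ℝ)*Va) := by
      rw [show β^2*(d:ℝ)*(Va+((d:ℝ)-1)*Ca)
        = (d:ℝ)*(β*(Va+((d:ℝ)-1)*Ca))*β from by ring, hβS]
      ring
    rw [hkey]
  -- (3) squares
  · have hexp : ∀ m ∈ Finset.range ((a+1+1)*K+1),
        (eqW (genNet K Ψ) ((a+1)*K+k) m)^2
        = ((if m = (a+1)*K+k then (1:ℝ) else 0)
          + 2*β*((if m = (a+1)*K+k then (1:ℝ) else 0)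
              * (∑ ψ ∈ Ψ k, eqW (genNet K Ψ) (a*K+ψ) m)))
          + β^2*((∑ ψ ∈ Ψ k, eqW (genNet K Ψ) (a*K+ψ) m)
              * (∑ ψ ∈ Ψ k, eqW (genNet K Ψ) (a*K+ψ) m)) := by
      intro m _
      rw [hstep m]
      split_ifs <;> ring
    rw [Finset.sum_congr rfl hexp, Finset.sum_add_distrib, Finset.sum_add_distrib,
      sum_delta _ _ (by omega), ← Finset.mul_sum,
      sum_delta_mul _ _ (by omega) (fun m => ∑ ψ ∈ Ψ k, eqW (genNet K Ψ) (a*K+ψ) m),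
      hTzero k hk _ (Or.inl (by omega)), mul_zero, add_zero, ← Finset.mul_sum]
    have hTT : ∑ m ∈ Finset.range ((a+1+1)*K+1),
        ((∑ ψ ∈ Ψ k, eqW (genNet K Ψ) (a*K+ψ) m)
          * (∑ ψ ∈ Ψ k, eqW (genNet K Ψ) (a*K+ψ) m))
        = (d:ℝ)*(Va - Ca) + ((d:ℝ)*(d:ℝ))*Ca := by
      rw [Finset.sum_congr rfl (fun m _ => Finset.sum_mul_sum (Ψ k) (Ψ k)
        (fun ψ => eqW (genNet K Ψ) (a*K+ψ) m) (fun ψ => eqW (genNet K Ψ) (a*K+ψ) m)),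
        Finset.sum_comm,
        Finset.sum_congr rfl (fun ψ _ => Finset.sum_comm)]
      rw [Finset.sum_congr rfl (fun ψ hψ => Finset.sum_congr rfl
        (fun ψ' hψ' => hcross k hk ψ hψ ψ' hψ')),
        pair_count (Ψ k) (Ψ k) Va Ca, Finset.inter_self, hcard k hk]
    rw [hTT, hV1]
    ring
  -- (4) cross
  · intro k2 hk2 hne
    have hk2' := Finset.mem_Icc.mp hk2
    have hstep2 := eqW_step K d c hd hc hcd Ψ hsub hcard a k2 hk2'.1 hk2'.2 hP
    rw [← hVa, ← hCa, ← hβ] at hstep2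
    have hexp : ∀ m ∈ Finset.range ((a+1+1)*K+1),
        eqW (genNet K Ψ) ((a+1)*K+k) m * eqW (genNet K Ψ) ((a+1)*K+k2) m
        = (((if m = (a+1)*K+k then (1:ℝ) else 0)*(if m = (a+1)*K+k2 then (1:ℝ) else 0)
          + β*((if m = (a+1)*K+k then (1:ℝ) else 0)
              * (∑ ψ ∈ Ψ k2, eqW (genNet K Ψ) (a*K+ψ) m)))
          + β*((if m = (a+1)*K+k2 then (1:ℝ) else 0)
              * (∑ ψ ∈ Ψ k, eqW (genNet K Ψ) (a*K+ψ) m)))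
          + β^2*((∑ ψ ∈ Ψ k, eqW (genNet K Ψ) (a*K+ψ) m)
              * (∑ ψ' ∈ Ψ k2, eqW (genNet K Ψ) (a*K+ψ') m)) := by
      intro m _
      rw [hstep m, hstep2 m]
      ring
    have hδδ : ∑ m ∈ Finset.range ((a+1+1)*K+1),
        (if m = (a+1)*K+k then (1:ℝ) else 0)*(if m = (a+1)*K+k2 then (1:ℝ) else 0) = 0 := by
      apply Finset.sum_eq_zero
      intro m _
      rcases eq_or_ne m ((a+1)*K+k) with h | h
      · rw [h, if_neg (show ¬((a+1)*K+k = (a+1)*K+k2) by omega), mul_zero]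
      · rw [if_neg h, zero_mul]
    rw [Finset.sum_congr rfl hexp, Finset.sum_add_distrib, Finset.sum_add_distrib,
      Finset.sum_add_distrib, hδδ, ← Finset.mul_sum,
      sum_delta_mul _ _ (by omega) (fun m => ∑ ψ ∈ Ψ k2, eqW (genNet K Ψ) (a*K+ψ) m),
      hTzero k2 hk2 _ (Or.inl (by omega)), mul_zero, ← Finset.mul_sum,
      sum_delta_mul _ _ (by omega) (fun m => ∑ ψ ∈ Ψ k, eqW (genNet K Ψ) (a*K+ψ) m),
      hTzero k hk _ (Or.inl (by omega)), mul_zero, ← Finset.mul_sum]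
    have hTT : ∑ m ∈ Finset.range ((a+1+1)*K+1),
        ((∑ ψ ∈ Ψ k, eqW (genNet K Ψ) (a*K+ψ) m)
          * (∑ ψ' ∈ Ψ k2, eqW (genNet K Ψ) (a*K+ψ') m))
        = (c:ℝ)*(Va - Ca) + ((d:ℝ)*(d:ℝ))*Ca := by
      rw [Finset.sum_congr rfl (fun m _ => Finset.sum_mul_sum (Ψ k) (Ψ k2)
        (fun ψ => eqW (genNet K Ψ) (a*K+ψ) m) (fun ψ' => eqW (genNet K Ψ) (a*K+ψ') m)),
        Finset.sum_comm,
        Finset.sum_congr rfl (fun ψ _ => Finset.sum_comm)]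
      rw [Finset.sum_congr rfl (fun ψ hψ => Finset.sum_congr rfl
        (fun ψ' hψ' => hcross k2 hk2 ψ hψ ψ' hψ')),
        pair_count (Ψ k) (Ψ k2) Va Ca, hinter k hk k2 hk2 hne,
        hcard k hk, hcard k2 hk2]
    rw [hTT, hC1]
    ring

theorem VC_C_pos (d c : ℝ) (hd : 2 ≤ d) (hc : 1 ≤ c) (hcd : c ≤ d) (n : ℕ) (hn : 1 ≤ n) :
    0 < (VC d c n).2 := by
  obtain ⟨m, rfl⟩ := Nat.exists_eq_add_of_le hn
  rw [show 1 + m = m + 1 from by omega]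
  obtain ⟨hV, hC, hD, hVn⟩ := VC_inv d c hd hc hcd m
  have hS : (1:ℝ) ≤ (VC d c m).1 + (d-1)*(VC d c m).2 := by nlinarith
  have hb0 : 0 < (VC d c m).1 / ((VC d c m).1 + (d-1)*(VC d c m).2) :=
    div_pos (by linarith) (by linarith)
  have h2' : (VC d c (m+1)).2 = ((VC d c m).1/((VC d c m).1+(d-1)*(VC d c m).2))^2 *
      (c*(VC d c m).1+(d^2-c)*(VC d c m).2) := rfl
  rw [h2']
  have h2 : 0 ≤ d^2 - c := by nlinarith
  have h3 : 0 < c*(VC d c m).1 + (d^2-c)*(VC d c m).2 := by nlinarith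
  have h4 : 0 < (VC d c m).1/((VC d c m).1+(d-1)*(VC d c m).2) :=
    div_pos (by linarith) (by linarith)
  positivity

theorem contract_tendsto (x : ℕ → ℝ) (l : ℝ) (hl0 : 0 ≤ l) (hl1 : l < 1)
    (hx0 : ∀ n, 0 ≤ x n) (hx1 : ∀ n, x n ≤ 1)
    (hrec : ∀ n : ℕ, x (n+1) ≤ 1/((n:ℝ)+2) + l * x n) :
    Tendsto x atTop (nhds 0) := by
  rw [Metric.tendsto_atTop]
  intro ε hε
  have hδ : 0 < ε/2 := by linarith
  have hδl : 0 < (ε/2)*(1-l) := mul_pos hδ (by linarith)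
  obtain ⟨N₁, hN₁⟩ := exists_nat_gt (1/((ε/2)*(1-l)))
  have hsmall : ∀ n : ℕ, N₁ ≤ n → 1/((n:ℝ)+2) ≤ (ε/2)*(1-l) := by
    intro n hn
    rw [div_le_iff₀ (by positivity)]
    rw [div_lt_iff₀ hδl] at hN₁
    have : (N₁:ℝ) ≤ n := by exact_mod_cast hn
    nlinarith
  have key : ∀ m : ℕ, x (N₁ + m) ≤ l^m + ε/2 := by
    intro m
    induction m with
    | zero => simpa using le_trans (hx1 N₁) (by linarith)
    | succ m ih =>
      have h1 := hrec (N₁ + m)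
      have h2 : 1/(((N₁+m:ℕ):ℝ)+2) ≤ (ε/2)*(1-l) := hsmall _ (Nat.le_add_right _ _)
      have h3 : l * x (N₁+m) ≤ l * (l^m + ε/2) := mul_le_mul_of_nonneg_left ih hl0
      calc x (N₁ + (m+1)) = x ((N₁ + m) + 1) := by ring_nf
        _ ≤ 1/(((N₁+m:ℕ):ℝ)+2) + l * x (N₁+m) := h1
        _ ≤ (ε/2)*(1-l) + l * (l^m + ε/2) := by linarith
        _ ≤ l^(m+1) + ε/2 := by ring_nf; nlinarith [pow_nonneg hl0 m]
  obtain ⟨m₀, hm₀⟩ := exists_pow_lt_of_lt_one hδ hl1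
  refine ⟨N₁ + m₀, fun n hn => ?_⟩
  have h1 : x n ≤ l^(n - N₁) + ε/2 := by
    have : N₁ + (n - N₁) = n := by omega
    simpa [this] using key (n - N₁)
  have h2 : l^(n-N₁) ≤ l^m₀ := pow_le_pow_of_le_one hl0 hl1.le (by omega)
  rw [Real.dist_eq, sub_zero, abs_of_nonneg (hx0 n)]
  linarith

noncomputable def xseq (d c : ℝ) (n : ℕ) : ℝ :=
  ((VC d c n).1 - (VC d c n).2)/(VC d c n).1

theorem xseq_tendsto (d c : ℝ) (hd : 2 ≤ d) (hc : 1 ≤ c) (hcd : c ≤ d) :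
    Tendsto (xseq d c) atTop (nhds 0) := by
  have hinv := VC_inv d c hd hc hcd
  apply contract_tendsto _ ((d-c)/d) (div_nonneg (by linarith) (by linarith)) ((div_lt_one (by linarith)).mpr (by linarith))
  · intro n
    obtain ⟨hV, hC, hD, hVn⟩ := hinv n
    exact div_nonneg (by linarith) (by linarith)
  · intro n
    obtain ⟨hV, hC, hD, hVn⟩ := hinv n
    rw [xseq, div_le_one (by linarith)]; linarith
  · intro n
    obtain ⟨hV, hC, hD, hVn⟩ := hinv n
    set V := (VC d c n).1
    set C := (VC d c n).2
    have hS : (1:ℝ) ≤ V + (d-1)*C := by nlinarith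
    set b := V / (V + (d-1)*C) with hbdef
    have hb0 : 0 < b := div_pos (by linarith) (by linarith)
    have hb1 : b ≤ 1 := by
      rw [hbdef, div_le_one (by linarith)]; nlinarith
    have hbS : b * (V + (d-1)*C) = V := div_mul_cancel₀ V (by linarith)
    have hVC1 : (VC d c (n+1)).1 = 1 + b^2 * d * (V + (d-1)*C) := rfl
    have hVC2 : (VC d c (n+1)).2 = b^2 * (c*V + (d^2-c)*C) := rfl
    have hV1' : (VC d c (n+1)).1 = 1 + d * b * V := by
      have h : b^2*d*(V + (d-1)*C) = d*b*(b*(V + (d-1)*C)) := by ring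
      rw [hVC1, h, hbS]
    have hD' : (VC d c (n+1)).1 - (VC d c (n+1)).2 = 1 + b^2*(d-c)*(V-C) := by
      rw [hVC1, hVC2]; ring
    have hVn1 : ((n:ℝ)+2) ≤ (VC d c (n+1)).1 := by
      have := (hinv (n+1)).2.2.2; push_cast at this ⊢; linarith
    have hV'pos : (0:ℝ) < (VC d c (n+1)).1 := lt_of_lt_of_le (by positivity) hVn1
    have hdbV : 0 < d*b*V := by positivity
    have hdbV' : d*b*V ≤ (VC d c (n+1)).1 := by rw [hV1']; linarith
    have hnum : 0 ≤ b^2*(d-c)*(V-C) :=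
      mul_nonneg (mul_nonneg (sq_nonneg b) (by linarith)) (by linarith)
    have e3 : (b^2*(d-c)*(V-C))/(d*b*V) = b*((d-c)/d*((V-C)/V)) := by
      field_simp
    have e4 : 0 ≤ (d-c)/d*((V-C)/V) :=
      mul_nonneg (div_nonneg (by linarith) (by linarith))
        (div_nonneg (by linarith) (by linarith))
    have e5 : b*((d-c)/d*((V-C)/V)) ≤ (d-c)/d*((V-C)/V) := by nlinarith
    calc xseq d c (n+1) = (1 + b^2*(d-c)*(V-C))/(VC d c (n+1)).1 := by rw [xseq, hD']
      _ = 1/(VC d c (n+1)).1 + (b^2*(d-c)*(V-C))/(VC d c (n+1)).1 := by rw [add_div]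
      _ ≤ 1/((n:ℝ)+2) + (b^2*(d-c)*(V-C))/(d*b*V) := by
          have e1 : 1/(VC d c (n+1)).1 ≤ 1/((n:ℝ)+2) :=
            one_div_le_one_div_of_le (by positivity) hVn1
          have e2 : (b^2*(d-c)*(V-C))/(VC d c (n+1)).1 ≤ (b^2*(d-c)*(V-C))/(d*b*V) :=
            div_le_div_of_nonneg_left hnum hdbV hdbV'
          linarith
      _ ≤ 1/((n:ℝ)+2) + (d-c)/d * xseq d c n := by
          have hxn : xseq d c n = (V-C)/V := rfl
          rw [hxn, e3]
          linarith [e5]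

theorem betaseq_tendsto (d c : ℝ) (hd : 2 ≤ d) (hc : 1 ≤ c) (hcd : c ≤ d) :
    Tendsto (fun n => (VC d c n).1/((VC d c n).1 + (d-1)*(VC d c n).2))
      atTop (nhds (1/d)) := by
  have hx := xseq_tendsto d c hd hc hcd
  have h1 : Tendsto (fun n => d - (d-1)*xseq d c n) atTop (nhds d) := by
    have := (hx.const_mul (d-1)).const_sub d
    simpa using this
  have h2 : Tendsto (fun n => 1/(d - (d-1)*xseq d c n)) atTop (nhds (1/d)) :=
    Tendsto.div tendsto_const_nhds h1 (by linarith)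
  refine h2.congr (fun n => ?_)
  obtain ⟨hV, hC, hD, hVn⟩ := VC_inv d c hd hc hcd n
  set V := (VC d c n).1
  set C := (VC d c n).2
  have hxV : xseq d c n = (V - C)/V := rfl
  have hden : d - (d-1)*((V-C)/V) = (V + (d-1)*C)/V := by
    field_simp; ring
  rw [hxV, hden, one_div_div]

theorem VdivC_tendsto (d c : ℝ) (hd : 2 ≤ d) (hc : 1 ≤ c) (hcd : c ≤ d) :
    Tendsto (fun n => (VC d c n).1/(VC d c n).2) atTop (nhds 1) := by
  have hx := xseq_tendsto d c hd hc hcd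
  have h1 : Tendsto (fun n => 1 - xseq d c n) atTop (nhds 1) := by
    simpa using (tendsto_const_nhds.sub hx)
  have h2 : Tendsto (fun n => (1 - xseq d c n)⁻¹) atTop (nhds 1) := by
    simpa using h1.inv₀ one_ne_zero
  refine h2.congr' ?_
  filter_upwards [eventually_ge_atTop 1] with n hn
  obtain ⟨hV, hC, hD, hVn⟩ := VC_inv d c hd hc hcd n
  have hCpos := VC_C_pos d c hd hc hcd n hn
  set V := (VC d c n).1
  set C := (VC d c n).2
  have hxV : xseq d c n = (V - C)/V := rfl
  have h3 : 1 - (V-C)/V = C/V := by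
    field_simp
    ring
  rw [hxV, h3, ← one_div, one_div_div]


/-- In a generations network with generation size `K ≥ 2`
associated to symmetric observation sets with parameters `(d, c)`, `d ≥ 2`,
`c ≥ 1`, the common neighbor-weight `β_t` of generation `t ≥ 2` satisfies
`β_t ≥ 1/d` and `β_t → 1/d`; equivalently
`β_{t+1} = Var_t/(Var_t + (d−1)Cov_t)` and `Var_t/Cov_t → 1`. -/
theorem beta_tends_to_inverse_degree (K d c : ℕ) (hK : 2 ≤ K) (hd : 2 ≤ d)
    (hc : 1 ≤ c) (Ψ : ℕ → Finset ℕ)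
    (hsub : ∀ k ∈ Finset.Icc 1 K, Ψ k ⊆ Finset.Icc 1 K)
    (hcard : ∀ k ∈ Finset.Icc 1 K, (Ψ k).card = d)
    (hinter : ∀ k₁ ∈ Finset.Icc 1 K, ∀ k₂ ∈ Finset.Icc 1 K, k₁ ≠ k₂ →
      ((Ψ k₁) ∩ (Ψ k₂)).card = c) :
    ∃ βs : ℕ → ℝ,
      (∀ t : ℕ, 2 ≤ t → ∀ k ∈ Finset.Icc 1 K,
        ∀ j (hj : j ∈ nbr (genNet K Ψ) ((t - 1) * K + k)),
          eqBeta (genNet K Ψ) ((t - 1) * K + k) ⟨j, hj⟩ = βs t) ∧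
      (∀ t : ℕ, 2 ≤ t → 1 / (d : ℝ) ≤ βs t) ∧
      Tendsto βs atTop (nhds (1 / (d : ℝ))) ∧
      (∀ t : ℕ, 1 ≤ t →
        βs (t + 1) = VarT (genNet K Ψ) K t
          / (VarT (genNet K Ψ) K t + ((d : ℝ) - 1) * CovT (genNet K Ψ) K t)) ∧
      Tendsto (fun t : ℕ => VarT (genNet K Ψ) K t / CovT (genNet K Ψ) K t)
        atTop (nhds 1) := by
  have h1K : (1:ℕ) ∈ Finset.Icc 1 K := Finset.mem_Icc.mpr ⟨le_refl 1, by omega⟩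
  have h2K : (2:ℕ) ∈ Finset.Icc 1 K := Finset.mem_Icc.mpr ⟨by omega, hK⟩
  have hcd : c ≤ d := by
    rw [← hinter 1 h1K 2 h2K (by omega), ← hcard 1 h1K]
    exact Finset.card_le_card Finset.inter_subset_left
  have hdR : (2:ℝ) ≤ (d:ℝ) := by exact_mod_cast hd
  have hcR : (1:ℝ) ≤ (c:ℝ) := by exact_mod_cast hc
  have hcdR : (c:ℝ) ≤ (d:ℝ) := by exact_mod_cast hcd
  have hpack : ∀ a : ℕ, Pack K d c Ψ a := by
    intro a
    induction a with
    | zero => exact pack_zero K d c (by omega) Ψ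
    | succ n ih => exact pack_succ K d c hK hd hc hcd Ψ hsub hcard hinter n ih
  refine ⟨fun t => (VC d c (t-2)).1 / ((VC d c (t-2)).1 + ((d:ℝ)-1)*(VC d c (t-2)).2),
    ?_, ?_, ?_, ?_, ?_⟩
  · -- eqBeta is constant on generations
    intro t ht k hk j hj
    obtain ⟨a, rfl⟩ : ∃ a, t = a + 2 := ⟨t - 2, by omega⟩
    have hk' := Finset.mem_Icc.mp hk
    exact beta_const K d c hd hc hcd Ψ hsub hcard a k hk'.1 hk'.2 (hpack a) ⟨j, hj⟩
  · -- lower bound 1/d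
    intro t ht
    obtain ⟨a, rfl⟩ : ∃ a, t = a + 2 := ⟨t - 2, by omega⟩
    obtain ⟨hV, hC, hD, hVn⟩ := VC_inv (d:ℝ) (c:ℝ) hdR hcR hcdR a
    have hS1 : (1:ℝ) ≤ (VC d c a).1 + ((d:ℝ)-1)*(VC d c a).2 := by nlinarith
    show 1/(d:ℝ) ≤ (VC d c a).1 / ((VC d c a).1 + ((d:ℝ)-1)*(VC d c a).2)
    rw [div_le_div_iff₀ (by positivity) (by linarith)]
    nlinarith
  · -- convergence of beta
    exact (betaseq_tendsto (d:ℝ) (c:ℝ) hdR hcR hcdR).comp (tendsto_sub_atTop_nat 2)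
  · -- the Var/Cov formula
    intro t ht
    obtain ⟨a, rfl⟩ : ∃ a, t = a + 1 := ⟨t - 1, by omega⟩
    have hVar : VarT (genNet K Ψ) K (a+1) = (VC d c a).1 := (hpack a 1 h1K).2.2.1
    have hCov : CovT (genNet K Ψ) K (a+1) = (VC d c a).2 :=
      (hpack a 1 h1K).2.2.2 2 h2K (by omega)
    rw [hVar, hCov]
    rfl
  · -- convergence of Var/Cov
    refine Tendsto.congr' ?_
      ((VdivC_tendsto (d:ℝ) (c:ℝ) hdR hcR hcdR).comp (tendsto_sub_atTop_nat 1))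
    filter_upwards [eventually_ge_atTop 1] with t ht
    obtain ⟨a, rfl⟩ : ∃ a, t = a + 1 := ⟨t - 1, by omega⟩
    have hVar : VarT (genNet K Ψ) K (a+1) = (VC d c a).1 := (hpack a 1 h1K).2.2.1
    have hCov : CovT (genNet K Ψ) K (a+1) = (VC d c a).2 :=
      (hpack a 1 h1K).2.2.2 2 h2K (by omega)
    show (VC d c (a+1-1)).1 / (VC d c (a+1-1)).2 = _
    rw [hVar, hCov]
    rfl
end

section
/- For every σ > 0, the expected equilibrium welfare v_σ(r) is a strictly increasing function of the number r of aggregated signals: if r > r′ ≥ 1 then v_σ(r) > v_σ(r′). -/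
open MeasureTheory ProbabilityTheory Real

/-- The expected equilibrium welfare of an agent aggregating `r` signals when the
private signal variance is `σ²`:
`v_σ(r) = −½ ∫ (eˣ/(1+eˣ) − 1)² dN(2r/σ², 4r/σ²)(x) − ½ ∫ (eˣ/(1+eˣ))² dN(−2r/σ², 4r/σ²)(x)`. -/
noncomputable def welfare (σ r : ℝ) : ℝ :=
  -(1 / 2) * ∫ x, (Real.exp x / (1 + Real.exp x) - 1) ^ 2
      ∂(gaussianReal (2 * r / σ ^ 2) (Real.toNNReal (4 * r / σ ^ 2)))
  - (1 / 2) * ∫ x, (Real.exp x / (1 + Real.exp x)) ^ 2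
      ∂(gaussianReal (-(2 * r / σ ^ 2)) (Real.toNNReal (4 * r / σ ^ 2)))

open scoped NNReal ENNReal

lemma integral_gaussianReal_eq (μ : ℝ) {v : ℝ≥0} (hv : v ≠ 0) (g : ℝ → ℝ) :
    ∫ x, g x ∂(gaussianReal μ v) = ∫ x, gaussianPDFReal μ v x * g x := by
  rw [gaussianReal_of_var_ne_zero _ hv]
  have h : gaussianPDF μ v = fun x => ((Real.toNNReal (gaussianPDFReal μ v x) : ℝ≥0) : ℝ≥0∞) := rfl
  rw [h, integral_withDensity_eq_integral_smul
    ((measurable_gaussianPDFReal μ v).real_toNNReal) g]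
  refine integral_congr_ae (Filter.Eventually.of_forall fun x => ?_)
  simp [NNReal.smul_def, Real.coe_toNNReal _ (gaussianPDFReal_nonneg μ v x)]

lemma key_pointwise {m : ℝ} (hm : 0 < m) (x : ℝ) :
    gaussianPDFReal m (2*m).toNNReal x * (Real.exp x / (1 + Real.exp x) - 1)^2
      + gaussianPDFReal (-m) (2*m).toNNReal x * (Real.exp x / (1 + Real.exp x))^2
    = Real.exp (-(m/4)) * (gaussianPDFReal 0 (2*m).toNNReal x / (2 * Real.cosh (x/2))) := by
  have hvco : ((2*m).toNNReal : ℝ) = 2*m := Real.coe_toNNReal _ (by linarith)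
  simp only [gaussianPDFReal, hvco]
  have e1 : Real.exp (-(x - -m)^2/(2*(2*m)))
      = Real.exp (-(x-m)^2/(2*(2*m))) * (Real.exp x)⁻¹ := by
    rw [← Real.exp_neg, ← Real.exp_add]; congr 1; field_simp; ring
  have e2 : Real.exp (-(x-m)^2/(2*(2*m)))
      = Real.exp (-(x-0)^2/(2*(2*m))) * Real.exp (x/2) * Real.exp (-(m/4)) := by
    rw [← Real.exp_add, ← Real.exp_add]; congr 1; field_simp; ring
  rw [e1, e2, Real.cosh_eq, Real.exp_neg (x/2)]
  have hx : Real.exp x = Real.exp (x/2) * Real.exp (x/2) := by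
    rw [← Real.exp_add]; congr 1; ring
  rw [hx]
  have ht : 0 < Real.exp (x/2) := Real.exp_pos _
  set t := Real.exp (x/2) with htdef
  have h1 : (0:ℝ) < 1 + t*t := by positivity
  field_simp
  ring

noncomputable def Lint (c : ℝ) : ℝ := ∫ z, Real.exp (-z^2/2) / Real.cosh (c * z / 2)

lemma continuous_Lint_integrand (c : ℝ) :
    Continuous (fun z : ℝ => Real.exp (-z^2/2) / Real.cosh (c * z / 2)) := by
  refine Continuous.div ?_ ?_ (fun z => (Real.cosh_pos _).ne')
  · exact Real.continuous_exp.comp (by continuity)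
  · exact Real.continuous_cosh.comp (by continuity)

lemma integrable_Lint (c : ℝ) :
    Integrable (fun z : ℝ => Real.exp (-z^2/2) / Real.cosh (c * z / 2)) := by
  have hg : Integrable (fun z : ℝ => Real.exp (-z^2/2)) := by
    have h2 := integrable_exp_neg_mul_sq (show (0:ℝ) < 1/2 by norm_num)
    have h3 : ∀ z : ℝ, -z^2/2 = -(1/2 : ℝ) * z^2 := fun z => by ring
    simp_rw [h3]
    exact h2
  refine hg.mono' (continuous_Lint_integrand c).aestronglyMeasurable ?_
  refine Filter.Eventually.of_forall fun z => ?_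
  rw [Real.norm_eq_abs, abs_of_nonneg (by positivity)]
  exact div_le_self (Real.exp_nonneg _) (Real.one_le_cosh _)

lemma Lint_pos (c : ℝ) : 0 < Lint c := by
  rw [Lint]
  refine (integral_pos_iff_support_of_nonneg (fun z => by positivity)
    (integrable_Lint c)).mpr ?_
  have h : Function.support (fun z : ℝ => Real.exp (-z^2/2) / Real.cosh (c * z / 2))
      = Set.univ := by
    ext z
    simp only [Function.mem_support, Set.mem_univ, iff_true]
    positivity
  rw [h]
  simp

lemma Lint_anti {c c' : ℝ} (h0 : 0 ≤ c') (h : c' ≤ c) : Lint c ≤ Lint c' := by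
  refine integral_mono (integrable_Lint c) (integrable_Lint c') fun z => ?_
  have h1 : Real.cosh (c' * z / 2) ≤ Real.cosh (c * z / 2) := by
    rw [Real.cosh_le_cosh, abs_div, abs_div, abs_mul, abs_mul]
    gcongr
  gcongr
lemma gauss_sub {m : ℝ} (hm : 0 < m) :
    ∫ x, gaussianPDFReal 0 (2*m).toNNReal x / Real.cosh (x/2)
      = (Real.sqrt (2*π))⁻¹ * Lint (Real.sqrt (2*m)) := by
  have hvco : ((2*m).toNNReal : ℝ) = 2*m := Real.coe_toNNReal _ (by linarith)
  have hc : 0 < Real.sqrt (2*m) := Real.sqrt_pos.mpr (by linarith)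
  have key := MeasureTheory.Measure.integral_comp_mul_left
    (fun x => gaussianPDFReal 0 (2*m).toNNReal x / Real.cosh (x/2)) (Real.sqrt (2*m))
  -- key : ∫ z, g (√(2m) * z) = |(√(2m))⁻¹| • ∫ x, g x
  have hpt : ∀ z : ℝ, gaussianPDFReal 0 (2*m).toNNReal (Real.sqrt (2*m) * z)
      / Real.cosh (Real.sqrt (2*m) * z / 2)
      = (Real.sqrt (2*π*(2*m)))⁻¹ * (Real.exp (-z^2/2) / Real.cosh (Real.sqrt (2*m) * z / 2)) := by
    intro z
    simp only [gaussianPDFReal, hvco]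
    have h1 : (Real.sqrt (2*m) * z - 0)^2 = (2*m) * z^2 := by
      rw [sub_zero, mul_pow, Real.sq_sqrt (by linarith : (0:ℝ) ≤ 2*m)]
    rw [h1]
    have h2 : -(2*m*z^2) / (2*(2*m)) = -z^2/2 := by
      field_simp
    rw [h2]
    ring
  simp_rw [hpt] at key
  rw [integral_const_mul] at key
  rw [abs_of_nonneg (by positivity : (0:ℝ) ≤ (Real.sqrt (2*m))⁻¹), smul_eq_mul] at key
  -- key : (√(2π(2m)))⁻¹ * Lint (√(2m)) = (√(2m))⁻¹ * ∫ g
  have hs : Real.sqrt (2*π*(2*m)) = Real.sqrt (2*π) * Real.sqrt (2*m) := by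
    rw [← Real.sqrt_mul (by positivity)]
  have hπ : 0 < Real.sqrt (2*π) := Real.sqrt_pos.mpr (by positivity)
  rw [hs] at key
  have halg : ∀ (I L s t : ℝ), s ≠ 0 → t ≠ 0 → (t * s)⁻¹ * L = s⁻¹ * I → I = t⁻¹ * L := by
    intro I L s t hs' ht' h
    have h2 : s * ((t*s)⁻¹ * L) = s * (s⁻¹ * I) := by rw [h]
    rw [show s * (s⁻¹ * I) = I from by field_simp] at h2
    rw [← h2]
    field_simp
  rw [Lint]
  exact halg _ _ (Real.sqrt (2*m)) (Real.sqrt (2*π)) hc.ne' hπ.ne' key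


lemma welfare_eq {σ r : ℝ} (hσ : 0 < σ) (hr : 0 < r) :
    welfare σ r = -(Real.exp (-(2 * r / σ ^ 2 / 4)) / (4 * Real.sqrt (2*π)) *
      Lint (Real.sqrt (2 * (2 * r / σ ^ 2)))) := by
  rw [welfare]
  rw [show (4 : ℝ) * r / σ ^ 2 = 2 * (2 * r / σ ^ 2) from by ring]
  set m := 2 * r / σ ^ 2 with hm_def
  have hm : 0 < m := by rw [hm_def]; positivity
  have hvne : Real.toNNReal (2 * m) ≠ 0 := by
    rw [ne_eq, Real.toNNReal_eq_zero]
    push_neg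
    linarith
  rw [integral_gaussianReal_eq _ hvne, integral_gaussianReal_eq _ hvne]
  have hcont : Continuous fun x : ℝ => Real.exp x / (1 + Real.exp x) :=
    Real.continuous_exp.div (by continuity) (fun x => by positivity)
  have hfrac : ∀ x : ℝ, 0 ≤ Real.exp x / (1 + Real.exp x) ∧ Real.exp x / (1 + Real.exp x) ≤ 1 := by
    intro x
    have h1 : (0:ℝ) < 1 + Real.exp x := by positivity
    constructor
    · positivity
    · rw [div_le_one h1]; linarith [Real.exp_pos x]
  have hint : ∀ (μ' : ℝ) (g : ℝ → ℝ), Continuous g → (∀ x, 0 ≤ g x) → (∀ x, g x ≤ 1) →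
      Integrable (fun x => gaussianPDFReal μ' (Real.toNNReal (2*m)) x * g x) := by
    intro μ' g hg h0 h1
    refine (integrable_gaussianPDFReal μ' (Real.toNNReal (2*m))).mono'
      (((measurable_gaussianPDFReal _ _).mul hg.measurable).aestronglyMeasurable) ?_
    refine Filter.Eventually.of_forall fun x => ?_
    rw [Real.norm_eq_abs, abs_of_nonneg (mul_nonneg (gaussianPDFReal_nonneg _ _ x) (h0 x))]
    calc gaussianPDFReal μ' _ x * g x ≤ gaussianPDFReal μ' _ x * 1 :=
          mul_le_mul_of_nonneg_left (h1 x) (gaussianPDFReal_nonneg _ _ x)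
      _ = _ := mul_one _
  have hiA : Integrable (fun x => gaussianPDFReal m (Real.toNNReal (2*m)) x *
      (Real.exp x / (1 + Real.exp x) - 1) ^ 2) := by
    refine hint m _ ((hcont.sub continuous_const).pow 2) (fun x => sq_nonneg _) fun x => ?_
    obtain ⟨h0, h1⟩ := hfrac x
    nlinarith
  have hiB : Integrable (fun x => gaussianPDFReal (-m) (Real.toNNReal (2*m)) x *
      (Real.exp x / (1 + Real.exp x)) ^ 2) := by
    refine hint (-m) _ (hcont.pow 2) (fun x => sq_nonneg _) fun x => ?_
    obtain ⟨h0, h1⟩ := hfrac x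
    nlinarith
  rw [show ∀ a b : ℝ, -(1/2) * a - (1/2) * b = -(1/2) * (a + b) from fun a b => by ring]
  rw [← integral_add hiA hiB]
  have hpt : ∫ x, (gaussianPDFReal m (Real.toNNReal (2*m)) x *
        (Real.exp x / (1 + Real.exp x) - 1) ^ 2 +
      gaussianPDFReal (-m) (Real.toNNReal (2*m)) x * (Real.exp x / (1 + Real.exp x)) ^ 2)
      = ∫ x, Real.exp (-(m/4)) *
        (gaussianPDFReal 0 (Real.toNNReal (2*m)) x / (2 * Real.cosh (x/2))) := by
    refine integral_congr_ae (Filter.Eventually.of_forall fun x => ?_)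
    have := key_pointwise hm x
    simpa [pow_two] using this
  rw [hpt, integral_const_mul]
  have hhalf : ∫ x, gaussianPDFReal 0 (Real.toNNReal (2*m)) x / (2 * Real.cosh (x/2))
      = (1/2) * ∫ x, gaussianPDFReal 0 (Real.toNNReal (2*m)) x / Real.cosh (x/2) := by
    rw [← integral_const_mul]
    refine integral_congr_ae (Filter.Eventually.of_forall fun x => ?_)
    ring
  rw [hhalf, gauss_sub hm]
  have hπ : Real.sqrt (2*π) ≠ 0 := by
    refine (Real.sqrt_pos.mpr (by positivity)).ne'
  simp only [div_eq_mul_inv, mul_inv]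
  ring


/-- For every `σ > 0`, the expected equilibrium welfare `v_σ(r)` is
strictly increasing in the number `r` of aggregated signals: if `r > r′ ≥ 1` then
`v_σ(r) > v_σ(r′)`. -/
theorem welfare_strictMono (σ : ℝ) (hσ : 0 < σ) (r r' : ℝ) (hr' : 1 ≤ r')
    (hrr' : r' < r) : welfare σ r' < welfare σ r := by
  have hr'0 : (0:ℝ) < r' := by linarith
  have hr0 : (0:ℝ) < r := by linarith
  rw [welfare_eq hσ hr'0, welfare_eq hσ hr0]
  set m' := 2 * r' / σ ^ 2 with hm'def
  set m := 2 * r / σ ^ 2 with hmdef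
  have hσ2 : (0:ℝ) < σ ^ 2 := by positivity
  have hm' : 0 < m' := by rw [hm'def]; positivity
  have hmm : m' < m := by
    rw [hm'def, hmdef, div_lt_div_iff₀ hσ2 hσ2]
    nlinarith
  have hexp : Real.exp (-(m/4)) < Real.exp (-(m'/4)) := Real.exp_lt_exp.mpr (by linarith)
  have hsq : Real.sqrt (2*m') ≤ Real.sqrt (2*m) := Real.sqrt_le_sqrt (by linarith)
  have hLle : Lint (Real.sqrt (2*m)) ≤ Lint (Real.sqrt (2*m')) :=
    Lint_anti (Real.sqrt_nonneg _) hsq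
  have hLpos' : 0 < Lint (Real.sqrt (2*m')) := Lint_pos _
  have hπ : (0:ℝ) < 4 * Real.sqrt (2*π) := by positivity
  refine neg_lt_neg ?_
  calc Real.exp (-(m/4)) / (4 * Real.sqrt (2*π)) * Lint (Real.sqrt (2*m))
      ≤ Real.exp (-(m/4)) / (4 * Real.sqrt (2*π)) * Lint (Real.sqrt (2*m')) := by
        exact mul_le_mul_of_nonneg_left hLle (by positivity)
    _ < Real.exp (-(m'/4)) / (4 * Real.sqrt (2*π)) * Lint (Real.sqrt (2*m')) := by
        exact mul_lt_mul_of_pos_right ((div_lt_div_iff_of_pos_right hπ).mpr hexp) hLpos'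
end

section
/- For any network with equilibrium weight vectors W_i and signal counts r_i := Σ_j W_i(j): if j ∈ N(i), then r_i ≥ r_j + 1. In particular, along any directed path in the network the signal counts increase by at least 1 per step, so r_i ≥ PL(i) + 1 where PL(i) is the length of the longest directed path starting from i. -/
open Matrix Finset Filter

/-- Length of the longest directed path in the network starting from `i`
(a directed path from `i` is a sequence `i = i₀, i₁, …, i_L` with
`i_{s+1} ∈ N(i_s)`; `PL(i) = 0` if `N(i) = ∅`). -/
noncomputable def PL (Net : ℕ → Finset ℕ) (i : ℕ) : ℕ :=
  sSup {L | ∃ f : ℕ → ℕ, f 0 = i ∧ ∀ s < L, f (s + 1) ∈ Net (f s)}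

set_option linter.unnecessarySeqFocus false
set_option linter.unusedSectionVars false

section Aux
variable (Net : ℕ → Finset ℕ)

def nbhd (n : ℕ) : Finset ℕ := (Net n).filter (fun j => j < n)

noncomputable def Wmat (n : ℕ) : Matrix {j // j ∈ nbhd Net n} (Fin (n - 1)) ℝ :=
  Matrix.of (fun j m => eqW Net j.1 (m.1 + 1))

noncomputable def betaV (n : ℕ) : {j // j ∈ nbhd Net n} → ℝ :=
  Matrix.vecMul (fun j => ∑ m, Wmat Net n j m) ((Wmat Net n * (Wmat Net n).transpose)⁻¹)

lemma Wmat_apply (n : ℕ) (j : {j // j ∈ nbhd Net n}) (m : Fin (n-1)) :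
    Wmat Net n j m = eqW Net j.1 (m.1 + 1) := rfl

lemma betaV_def (n : ℕ) :
    betaV Net n = Matrix.vecMul (fun j => ∑ m, Wmat Net n j m)
      ((Wmat Net n * (Wmat Net n).transpose)⁻¹) := rfl

lemma eqW_of_empty (n : ℕ) (h : ¬ (nbhd Net n).Nonempty) :
    eqW Net n = fun m => if m = n then (1:ℝ) else 0 := by
  unfold nbhd at h
  unfold eqW
  rw [Nat.strongRecOn_eq]
  rw [if_neg h]

lemma eqW_of_nonempty (n : ℕ) (h : (nbhd Net n).Nonempty) :
    eqW Net n = fun m => (if m = n then (1:ℝ) else 0) +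
      ∑ j : {j // j ∈ nbhd Net n}, betaV Net n j * eqW Net j.1 m := by
  unfold nbhd at h
  conv_lhs => unfold eqW
  rw [Nat.strongRecOn_eq, if_pos h]
  unfold betaV Wmat nbhd eqW
  rfl


lemma nbhd_lt {n j : ℕ} (h : j ∈ nbhd Net n) : j < n := (Finset.mem_filter.mp h).2

lemma eqW_zero_of_gt : ∀ n m : ℕ, n < m → eqW Net n m = 0 := by
  intro n
  induction n using Nat.strong_induction_on with
  | _ n ih =>
    intro m hm
    by_cases h : (nbhd Net n).Nonempty
    · simp only [eqW_of_nonempty Net n h]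
      rw [if_neg (by omega), Finset.sum_eq_zero, zero_add]
      intro j _
      rw [ih j.1 (nbhd_lt Net j.2) m (lt_trans (nbhd_lt Net j.2) hm), mul_zero]
    · simp only [eqW_of_empty Net n h]
      rw [if_neg (by omega)]

lemma eqW_self (n : ℕ) : eqW Net n n = 1 := by
  by_cases h : (nbhd Net n).Nonempty
  · simp only [eqW_of_nonempty Net n h]
    rw [if_true, Finset.sum_eq_zero, add_zero]
    intro j _
    rw [eqW_zero_of_gt Net j.1 n (nbhd_lt Net j.2), mul_zero]
  · simp only [eqW_of_empty Net n h]
    rw [if_true]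

variable (hNet : ∀ i, ∀ j ∈ Net i, 1 ≤ j ∧ j < i)

include hNet in
lemma mem_nbhd_of_mem {n j : ℕ} (h : j ∈ Net n) : j ∈ nbhd Net n :=
  Finset.mem_filter.mpr ⟨h, (hNet n j h).2⟩

include hNet in
lemma nbhd_pos {n j : ℕ} (h : j ∈ nbhd Net n) : 1 ≤ j :=
  (hNet n j (Finset.mem_filter.mp h).1).1

include hNet in
lemma eqW_zero_zero : ∀ n : ℕ, 1 ≤ n → eqW Net n 0 = 0 := by
  intro n
  induction n using Nat.strong_induction_on with
  | _ n ih =>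
    intro hn
    by_cases h : (nbhd Net n).Nonempty
    · simp only [eqW_of_nonempty Net n h]
      rw [if_neg (by omega), Finset.sum_eq_zero, zero_add]
      intro j _
      rw [ih j.1 (nbhd_lt Net j.2) (nbhd_pos Net hNet j.2), mul_zero]
    · simp only [eqW_of_empty Net n h]
      rw [if_neg (by omega)]

-- sum extension
lemma sum_ext {N j : ℕ} (hj : j ≤ N) (f : ℕ → ℝ) :
    ∑ m ∈ Finset.range (N + 1), f m * eqW Net j m = ∑ m ∈ Finset.range (j + 1), f m * eqW Net j m := by
  refine (Finset.sum_subset (by intro x hx; simp at hx ⊢; omega) ?_).symm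
  intro m _ hm
  simp only [Finset.mem_range, not_lt] at hm
  rw [eqW_zero_of_gt Net j m (by omega), mul_zero]

lemma sum_sq_ext {N j : ℕ} (hj : j ≤ N) :
    ∑ m ∈ Finset.range (N + 1), (eqW Net j m)^2 = ∑ m ∈ Finset.range (j + 1), (eqW Net j m)^2 := by
  refine (Finset.sum_subset (by intro x hx; simp at hx ⊢; omega) ?_).symm
  intro m _ hm
  simp only [Finset.mem_range, not_lt] at hm
  rw [eqW_zero_of_gt Net j m (by omega)]
  ring

include hNet in
lemma sum_shift {n j : ℕ} (hj : j ∈ nbhd Net n) (f : ℕ → ℝ) :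
    ∑ m ∈ Finset.range (n + 1), f m * eqW Net j m
      = ∑ m : Fin (n-1), f (m.1+1) * eqW Net j (m.1+1) := by
  have hjn := nbhd_lt Net hj
  have hn : n - 1 + 1 = n := by omega
  rw [Fin.sum_univ_eq_sum_range (fun m => f (m+1) * eqW Net j (m+1)) (n-1)]
  have := Finset.sum_range_succ' (fun m => f m * eqW Net j m) (n - 1)
  rw [hn] at this
  rw [show n + 1 = n - 1 + 1 + 1 by omega, Finset.sum_range_succ,
    show n - 1 + 1 = n by omega, this, eqW_zero_zero Net hNet j (nbhd_pos Net hNet hj), mul_zero, add_zero,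
    eqW_zero_of_gt Net j n hjn, mul_zero, add_zero]

include hNet in
lemma rcount_eq_rowsum {n j : ℕ} (hj : j ∈ nbhd Net n) :
    rcount Net j = ∑ m : Fin (n-1), eqW Net j (m.1+1) := by
  have h1 : rcount Net j = ∑ m ∈ Finset.range (n + 1), (1:ℝ) * eqW Net j m := by
    rw [sum_ext Net (by have := nbhd_lt Net hj; omega)]
    unfold rcount; simp
  rw [h1, sum_shift Net hNet hj (fun _ => 1)]
  simp

include hNet in
lemma sumsq_eq_rowsumsq {n j : ℕ} (hj : j ∈ nbhd Net n) :
    ∑ m ∈ Finset.range (j + 1), (eqW Net j m)^2 = ∑ m : Fin (n-1), (eqW Net j (m.1+1))^2 := by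
  have h1 : ∑ m ∈ Finset.range (j+1), (eqW Net j m)^2
      = ∑ m ∈ Finset.range (n + 1), eqW Net j m * eqW Net j m := by
    rw [sum_ext Net (by have := nbhd_lt Net hj; omega)]
    exact Finset.sum_congr rfl (by intro x _; ring)
  rw [h1, sum_shift Net hNet hj (eqW Net j)]
  exact Finset.sum_congr rfl (by intro x _; ring)

include hNet in
lemma vecMul_W_eq_zero {n : ℕ} (c : {j // j ∈ nbhd Net n} → ℝ)
    (hc : Matrix.vecMul c (Wmat Net n) = 0) : c = 0 := by
  by_contra hne
  obtain ⟨k, hk⟩ := Function.ne_iff.mp hne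
  simp only [Pi.zero_apply] at hk
  have hT : (Finset.univ.filter (fun k => c k ≠ 0)).Nonempty :=
    ⟨k, by simp [hk]⟩
  obtain ⟨k₀, hk₀T, hmax⟩ := Finset.exists_max_image _ (fun k => k.1) hT
  simp only [Finset.mem_filter] at hk₀T
  have hk₀ : c k₀ ≠ 0 := hk₀T.2
  have h1 : 1 ≤ k₀.1 := nbhd_pos Net hNet k₀.2
  have hlt : k₀.1 < n := nbhd_lt Net k₀.2
  set m₀ : Fin (n-1) := ⟨k₀.1 - 1, by omega⟩ with hm₀
  have hm : m₀.1 + 1 = k₀.1 := by simp [hm₀]; omega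
  have h0 := congrFun hc m₀
  simp only [Matrix.vecMul, dotProduct, Pi.zero_apply] at h0
  rw [Finset.sum_eq_single k₀] at h0
  · rw [Wmat_apply, hm, eqW_self, mul_one] at h0
    exact hk₀ h0
  · intro b _ hb
    rw [Wmat_apply, hm]
    rcases lt_trichotomy b.1 k₀.1 with h | h | h
    · rw [eqW_zero_of_gt Net b.1 k₀.1 h, mul_zero]
    · exact absurd (Subtype.ext h) hb
    · have : c b = 0 := by
        by_contra hcb
        have := hmax b (Finset.mem_filter.mpr ⟨Finset.mem_univ _, hcb⟩)
        omega
      rw [this, zero_mul]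
  · intro h; exact absurd (Finset.mem_univ _) h

include hNet in
lemma gram_det_isUnit (n : ℕ) : IsUnit (Wmat Net n * (Wmat Net n)ᵀ).det := by
  set W := Wmat Net n
  have hpd : (W * Wᵀ).PosDef := by
    rw [Matrix.posDef_iff_dotProduct_mulVec]
    constructor
    · ext i j
      simp [Matrix.conjTranspose_apply, Matrix.mul_apply, mul_comm]
    · intro x hx
      have hz : Matrix.vecMul x W ≠ 0 := fun h => hx (vecMul_W_eq_zero Net hNet x h)
      have hcomp : star x ⬝ᵥ ((W * Wᵀ) *ᵥ x) = (Matrix.vecMul x W) ⬝ᵥ (Matrix.vecMul x W) := by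
        rw [show (star x : _ → ℝ) = x from rfl, ← Matrix.mulVec_mulVec,
          Matrix.dotProduct_mulVec, Matrix.mulVec_transpose]
      rw [hcomp]
      have hne : Matrix.vecMul x W ⬝ᵥ Matrix.vecMul x W ≠ 0 :=
        fun h => hz (dotProduct_self_eq_zero.mp h)
      have hnonneg : 0 ≤ Matrix.vecMul x W ⬝ᵥ Matrix.vecMul x W :=
        Finset.sum_nonneg fun i _ => mul_self_nonneg _
      exact lt_of_le_of_ne hnonneg (Ne.symm hne)
  exact (Matrix.isUnit_iff_isUnit_det _).mp hpd.isUnit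

include hNet in
lemma rcount_eq_one_add (n : ℕ) (h : (nbhd Net n).Nonempty) :
    rcount Net n = 1 + dotProduct (betaV Net n) (fun j => ∑ m, Wmat Net n j m) := by
  unfold rcount
  simp only [eqW_of_nonempty Net n h]
  rw [Finset.sum_add_distrib, Finset.sum_ite_eq' (Finset.range (n+1)) n (fun _ => (1:ℝ)),
    if_pos (Finset.self_mem_range_succ n), Finset.sum_comm]
  congr 1
  rw [dotProduct]
  refine Finset.sum_congr rfl ?_
  intro j _
  rw [← Finset.mul_sum]
  congr 1
  have h1 : ∑ m ∈ Finset.range (n + 1), eqW Net j.1 m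
      = ∑ m ∈ Finset.range (j.1 + 1), eqW Net j.1 m := by
    have := sum_ext Net (N := n) (j := j.1) (by have := nbhd_lt Net j.2; omega) (fun _ => 1)
    simpa using this
  rw [h1]
  have h2 := rcount_eq_rowsum Net hNet j.2
  unfold rcount at h2
  rw [h2]
  refine Finset.sum_congr rfl ?_
  intro m _
  rw [Wmat_apply]

include hNet in
lemma rcount_eq_sumsq (n : ℕ) :
    rcount Net n = ∑ m ∈ Finset.range (n+1), (eqW Net n m)^2 := by
  by_cases h : (nbhd Net n).Nonempty
  · obtain ⟨j', hj'⟩ := h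
    have h : (nbhd Net n).Nonempty := ⟨j', hj'⟩
    have hn1 : 1 ≤ n := by have := nbhd_lt Net hj'; omega
    set W := Wmat Net n with hW
    set v : {j // j ∈ nbhd Net n} → ℝ := fun j => ∑ m, W j m with hv
    set β := betaV Net n with hβdef
    set G := W * Wᵀ with hG
    have hdet := gram_det_isUnit Net hNet n
    have hGsym : Gᵀ = G := by
      ext i j; simp [hG, Matrix.transpose_apply, Matrix.mul_apply, mul_comm]
    have hβ : β = G⁻¹ *ᵥ v := by
      rw [hβdef, betaV_def]
      calc Matrix.vecMul v G⁻¹ = Matrix.vecMul v (Gᵀ)⁻¹ := by rw [hGsym]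
        _ = Matrix.vecMul v (G⁻¹)ᵀ := by rw [Matrix.transpose_nonsing_inv]
        _ = G⁻¹ *ᵥ v := by rw [Matrix.vecMul_transpose]
    have hGβ : G *ᵥ β = v := by
      rw [hβ, Matrix.mulVec_mulVec, Matrix.mul_nonsing_inv _ hdet, Matrix.one_mulVec]
    have hvGβ : Matrix.vecMul β G = v := by
      rw [← hGsym, Matrix.vecMul_transpose, hGβ]
    have hxx : dotProduct (Matrix.vecMul β W) (Matrix.vecMul β W)
        = dotProduct β v := by
      nth_rewrite 2 [show Matrix.vecMul β W = Wᵀ *ᵥ β from (Matrix.mulVec_transpose W β).symm]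
      rw [Matrix.dotProduct_mulVec, Matrix.vecMul_vecMul, ← hG, hvGβ, dotProduct_comm]
    -- now expand the sum of squares
    have hu0 : (∑ j, β j * eqW Net j.1 0) = 0 := by
      refine Finset.sum_eq_zero fun j _ => ?_
      rw [eqW_zero_zero Net hNet j.1 (nbhd_pos Net hNet j.2), mul_zero]
    have hun : (∑ j, β j * eqW Net j.1 n) = 0 := by
      refine Finset.sum_eq_zero fun j _ => ?_
      rw [eqW_zero_of_gt Net j.1 n (nbhd_lt Net j.2), mul_zero]
    have hexp : ∑ m ∈ Finset.range (n+1), (eqW Net n m)^2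
        = 1 + ∑ m ∈ Finset.range (n+1), (∑ j, β j * eqW Net j.1 m)^2 := by
      simp only [eqW_of_nonempty Net n h, ← hβdef]
      have : ∀ m ∈ Finset.range (n+1),
          ((if m = n then (1:ℝ) else 0) + ∑ j, β j * eqW Net j.1 m)^2
          = (if m = n then (1:ℝ) else 0)
            + (if m = n then 2 * (∑ j, β j * eqW Net j.1 m) else 0)
            + (∑ j, β j * eqW Net j.1 m)^2 := by
        intro m _
        by_cases hm : m = n <;> simp [hm] <;> ring
      rw [Finset.sum_congr rfl this]
      rw [Finset.sum_add_distrib, Finset.sum_add_distrib,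
        Finset.sum_ite_eq' (Finset.range (n+1)) n (fun _ => (1:ℝ)),
        Finset.sum_ite_eq' (Finset.range (n+1)) n (fun m => 2 * (∑ j, β j * eqW Net j.1 m)),
        if_pos (Finset.self_mem_range_succ n), if_pos (Finset.self_mem_range_succ n),
        hun, mul_zero, add_zero]
    have hsq : ∑ m ∈ Finset.range (n+1), (∑ j, β j * eqW Net j.1 m)^2
        = dotProduct (Matrix.vecMul β W) (Matrix.vecMul β W) := by
      rw [Finset.sum_range_succ, hun]
      have h' := Finset.sum_range_succ' (fun m => (∑ j, β j * eqW Net j.1 m)^2) (n-1)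
      rw [show n - 1 + 1 = n from by omega] at h'
      rw [h', hu0, zero_pow (by norm_num : 2 ≠ 0), add_zero, add_zero]
      rw [← Fin.sum_univ_eq_sum_range (fun i => (∑ j, β j * eqW Net j.1 (i+1))^2) (n-1),
        dotProduct]
      refine Finset.sum_congr rfl fun m _ => ?_
      have hx : Matrix.vecMul β W m = ∑ j, β j * eqW Net j.1 (m.1+1) := by
        simp [Matrix.vecMul, dotProduct, hW, Wmat_apply]
      rw [hx, ← pow_two]
    rw [hexp, hsq, hxx, rcount_eq_one_add Net hNet n h, ← hβdef, ← hW, ← hv]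
  · simp only [rcount, eqW_of_empty Net n h]
    rw [Finset.sum_ite_eq' (Finset.range (n+1)) n (fun _ => (1:ℝ)),
      if_pos (Finset.self_mem_range_succ n)]
    have : ∀ m ∈ Finset.range (n+1), ((if m = n then (1:ℝ) else 0))^2
        = (if m = n then (1:ℝ) else 0) := by
      intro m _; by_cases hm : m = n <;> simp [hm]
    rw [Finset.sum_congr rfl this, Finset.sum_ite_eq' (Finset.range (n+1)) n (fun _ => (1:ℝ)),
      if_pos (Finset.self_mem_range_succ n)]

include hNet in
lemma rcount_step {n j₀ : ℕ} (hj : j₀ ∈ Net n) : rcount Net j₀ + 1 ≤ rcount Net n := by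
  have hjnb : j₀ ∈ nbhd Net n := mem_nbhd_of_mem Net hNet hj
  have h : (nbhd Net n).Nonempty := ⟨j₀, hjnb⟩
  set k : {j // j ∈ nbhd Net n} := ⟨j₀, hjnb⟩ with hk
  set W := Wmat Net n with hW
  set v : {j // j ∈ nbhd Net n} → ℝ := fun j => ∑ m, W j m with hv
  set β := betaV Net n with hβdef
  set G := W * Wᵀ with hG
  have hdet := gram_det_isUnit Net hNet n
  have hGsym : Gᵀ = G := by
    ext i j; simp [hG, Matrix.transpose_apply, Matrix.mul_apply, mul_comm]
  have hβ : β = G⁻¹ *ᵥ v := by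
    rw [hβdef, betaV_def]
    calc Matrix.vecMul v G⁻¹ = Matrix.vecMul v (Gᵀ)⁻¹ := by rw [hGsym]
      _ = Matrix.vecMul v (G⁻¹)ᵀ := by rw [Matrix.transpose_nonsing_inv]
      _ = G⁻¹ *ᵥ v := by rw [Matrix.vecMul_transpose]
  have hGβ : G *ᵥ β = v := by
    rw [hβ, Matrix.mulVec_mulVec, Matrix.mul_nonsing_inv _ hdet, Matrix.one_mulVec]
  have hvGβ : Matrix.vecMul β G = v := by
    rw [← hGsym, Matrix.vecMul_transpose, hGβ]
  -- v k = rcount j₀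
  have hvk : v k = rcount Net j₀ := by
    rw [hv, rcount_eq_rowsum Net hNet hjnb]
    exact Finset.sum_congr rfl fun m _ => by rw [hW, Wmat_apply]
  -- G k k = rcount j₀
  have hGkk : G k k = rcount Net j₀ := by
    rw [hG, Matrix.mul_apply]
    have : ∀ m, W k m * Wᵀ m k = (eqW Net j₀ (m.1+1))^2 := by
      intro m; rw [Matrix.transpose_apply, hW, Wmat_apply, ← pow_two]
    rw [Finset.sum_congr rfl fun m _ => this m, ← sumsq_eq_rowsumsq Net hNet hjnb,
      ← rcount_eq_sumsq Net hNet j₀]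
  -- positive semidefiniteness step
  set y : {j // j ∈ nbhd Net n} → ℝ := β - Pi.single k 1 with hy
  have hpsd : 0 ≤ dotProduct y (G *ᵥ y) := by
    rw [hG, ← Matrix.mulVec_mulVec, Matrix.dotProduct_mulVec, Matrix.mulVec_transpose]
    exact Finset.sum_nonneg fun i _ => mul_self_nonneg _
  have hexp : dotProduct y (G *ᵥ y)
      = dotProduct β v - 2 * v k + G k k := by
    rw [hy, Matrix.mulVec_sub, hGβ, sub_dotProduct, dotProduct_sub,
      dotProduct_sub]
    rw [single_dotProduct, Matrix.dotProduct_mulVec, hvGβ, dotProduct_single,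
      single_dotProduct, Matrix.mulVec_single]
    simp only [one_mul, mul_one, Pi.smul_apply, Matrix.col_apply, op_smul_eq_mul]
    ring
  have h1 : rcount Net n = 1 + dotProduct β v := by
    rw [rcount_eq_one_add Net hNet n h, ← hβdef, ← hW]
  rw [hvk, hGkk] at hexp
  rw [hexp] at hpsd
  rw [h1]
  linarith


include hNet in
lemma one_le_rcount (n : ℕ) : 1 ≤ rcount Net n := by
  rw [rcount_eq_sumsq Net hNet n]
  have h := Finset.single_le_sum (f := fun m => (eqW Net n m)^2)
    (fun m _ => sq_nonneg _) (Finset.self_mem_range_succ n)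
  simp only [eqW_self Net n, one_pow] at h
  exact h

include hNet in
lemma path_bound : ∀ L : ℕ, ∀ i : ℕ, ∀ f : ℕ → ℕ, f 0 = i →
    (∀ s < L, f (s+1) ∈ Net (f s)) → (L : ℝ) + 1 ≤ rcount Net i := by
  intro L
  induction L with
  | zero => intro i f _ _; simpa using one_le_rcount Net hNet i
  | succ L ih =>
    intro i f h0 hstep
    have h1 : f 1 ∈ Net i := by rw [← h0]; exact hstep 0 (by omega)
    have h2 := ih (f 1) (fun s => f (s+1)) rfl (fun s hs => hstep (s+1) (by omega))
    have h3 := rcount_step Net hNet h1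
    push_cast
    linarith

include hNet in
lemma PL_bound (i : ℕ) : (PL Net i : ℝ) + 1 ≤ rcount Net i := by
  have h0 : 0 ∈ {L | ∃ f : ℕ → ℕ, f 0 = i ∧ ∀ s < L, f (s + 1) ∈ Net (f s)} :=
    ⟨fun _ => i, rfl, by omega⟩
  have hbdd : BddAbove {L | ∃ f : ℕ → ℕ, f 0 = i ∧ ∀ s < L, f (s + 1) ∈ Net (f s)} := by
    refine ⟨i, fun L hL => ?_⟩
    obtain ⟨f, h0f, hstep⟩ := hL
    have key : ∀ s, s ≤ L → f s + s ≤ i := by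
      intro s
      induction s with
      | zero => intro _; omega
      | succ s ihs =>
        intro hs
        have hm := hstep s (by omega)
        have hlt := (hNet (f s) (f (s+1)) hm).2
        have := ihs (by omega)
        omega
    have := key L le_rfl
    omega
  have hmem : PL Net i ∈ {L | ∃ f : ℕ → ℕ, f 0 = i ∧ ∀ s < L, f (s + 1) ∈ Net (f s)} :=
    Nat.sSup_mem ⟨0, h0⟩ hbdd
  obtain ⟨f, h0f, hstep⟩ := hmem
  exact path_bound Net hNet _ i f h0f hstep

end Aux

/-- In any network, if `j ∈ N(i)` then `r_i ≥ r_j + 1`; in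
particular signal counts increase by at least one per step along directed paths,
so `r_i ≥ PL(i) + 1`. -/
theorem rcount_increases_along_paths
    (Net : ℕ → Finset ℕ) (hNet : ∀ i, ∀ j ∈ Net i, 1 ≤ j ∧ j < i) :
    (∀ i : ℕ, ∀ j ∈ Net i, rcount Net j + 1 ≤ rcount Net i) ∧
    (∀ i : ℕ, (PL Net i : ℝ) + 1 ≤ rcount Net i) := by
  exact ⟨fun i j hj => rcount_step Net hNet hj, fun i => PL_bound Net hNet i⟩
end
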